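/- Let ζ be a primitive 13th root of unity generating the cyclotomic field ℚ(ζ₁₃). The polynomial t⁴ + (ζ¹¹ + ζ⁹ + ζ⁸ + ζ⁷ + 2ζ⁶ + 2ζ⁵ + ζ³ + 2ζ² + ζ + 1)·t³ + 2t² + (ζ¹¹ − ζ⁹ + ζ⁸ + ζ⁷ − ζ³ − ζ)·t + 1 is irreducible in the polynomial ring ℚ(ζ₁₃)[t]. -/

import Mathlib

open Polynomial

/-- A monic quartic over a field with no linear and no (monic) quadratic factors
is irreducible. -/
private lemma quartic_irreducible {F : Type*} [Field F] {a3 a2 a1 a0 : F}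
    (h1 : ∀ x : F, x ^ 4 + a3 * x ^ 3 + a2 * x ^ 2 + a1 * x + a0 ≠ 0)
    (h2 : ∀ a b : F, ¬(a1 - b * (a3 - a) - a * (a2 - b - a * (a3 - a)) = 0 ∧
        a0 - b * (a2 - b - a * (a3 - a)) = 0)) :
    Irreducible (X ^ 4 + C a3 * X ^ 3 + C a2 * X ^ 2 + C a1 * X + C a0 : F[X]) := by
  set f : F[X] := X ^ 4 + C a3 * X ^ 3 + C a2 * X ^ 2 + C a1 * X + C a0 with hf
  have hdeg : f.natDegree = 4 := by unfold f; compute_degree!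
  have hM : f.Monic := by unfold f; monicity!
  have hne1 : f ≠ 1 := by
    intro h; rw [h, natDegree_one] at hdeg; exact absurd hdeg (by norm_num)
  rw [hM.irreducible_iff_degree_lt hne1]
  intro q hq hdvd
  by_contra hqu
  have hq0 : q ≠ 0 := by
    rintro rfl
    exact hM.ne_zero (zero_dvd_iff.mp hdvd)
  rw [hdeg] at hq
  have hqd2 : q.natDegree ≤ 2 := natDegree_le_iff_degree_le.mpr (by exact_mod_cast hq)
  have hqd1 : 1 ≤ q.natDegree := by
    by_contra h
    push_neg at h
    obtain ⟨c, rfl⟩ := natDegree_eq_zero.mp (Nat.lt_one_iff.mp h)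
    exact hqu (isUnit_C.mpr (isUnit_iff_ne_zero.mpr (fun hc => hq0 (by rw [hc, map_zero]))))
  set q' := q * C (q.leadingCoeff)⁻¹ with hq'def
  have hq'M : q'.Monic := monic_mul_leadingCoeff_inv hq0
  have hq'dvd : q' ∣ f := by
    refine dvd_trans ⟨C q.leadingCoeff, ?_⟩ hdvd
    rw [hq'def, mul_assoc, ← C_mul, inv_mul_cancel₀ (leadingCoeff_ne_zero.mpr hq0), C_1, mul_one]
  have hdq' : q'.natDegree = q.natDegree :=
    natDegree_eq_of_degree_eq (degree_mul_leadingCoeff_inv q hq0)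
  rcases (by omega : q'.natDegree = 1 ∨ q'.natDegree = 2) with h1' | h2'
  · -- linear factor: root
    have hqeq := hq'M.eq_X_add_C h1'
    have hdvd' : (X - C (-(q'.coeff 0))) ∣ f := by
      rwa [map_neg, sub_neg_eq_add, ← hqeq]
    have hroot : f.IsRoot (-(q'.coeff 0)) := dvd_iff_isRoot.mp hdvd'
    apply h1 (-(q'.coeff 0))
    simpa [hf, IsRoot] using hroot
  · -- quadratic factor
    set a := q'.coeff 1 with ha
    set b := q'.coeff 0 with hb
    have hq'eq : q' = X ^ 2 + C a * X + C b := by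
      ext n
      match n with
      | 0 => simp [hb]
      | 1 => simp [ha]
      | 2 =>
        have : q'.coeff 2 = 1 := by
          have := hq'M.leadingCoeff
          rwa [leadingCoeff, h2'] at this
        simp [this, coeff_X_pow]
      | (n + 3) =>
        rw [coeff_eq_zero_of_natDegree_lt (by omega)]
        simp [coeff_X_pow, coeff_C]
    set r1 := a1 - b * (a3 - a) - a * (a2 - b - a * (a3 - a)) with hr1
    set r0 := a0 - b * (a2 - b - a * (a3 - a)) with hr0
    set k : F[X] := X ^ 2 + C (a3 - a) * X + C (a2 - b - a * (a3 - a)) with hk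
    set r : F[X] := C r1 * X + C r0 with hr
    have hsum : r + q' * k = f := by
      rw [hq'eq, hk, hr, hf, hr1, hr0]
      simp only [map_sub, map_add, map_mul]
      ring
    have hdegr : r.degree < q'.degree := by
      have h1r : r.degree ≤ 1 := by unfold r; compute_degree
      have h2r : q'.degree = 2 := by
        rw [degree_eq_natDegree hq'M.ne_zero, h2']; rfl
      rw [h2r]
      exact lt_of_le_of_lt h1r (by norm_num)
    have hmod : f %ₘ q' = r := (div_modByMonic_unique k r hq'M ⟨hsum, hdegr⟩).2
    have hzero : f %ₘ q' = 0 := (modByMonic_eq_zero_iff_dvd hq'M).mpr hq'dvd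
    rw [hmod] at hzero
    apply h2 a b
    constructor
    · have := congrArg (fun p => Polynomial.coeff p 1) hzero
      simpa [hr] using this
    · have := congrArg (fun p => Polynomial.coeff p 0) hzero
      simpa [hr] using this

private lemma zmod53_e3 : (10 : ZMod 53) ^ 11 + 10 ^ 9 + 10 ^ 8 + 10 ^ 7 + 2 * 10 ^ 6 +
    2 * 10 ^ 5 + 10 ^ 3 + 2 * 10 ^ 2 + 10 + 1 = 18 := by decide

private lemma zmod53_e1 : (10 : ZMod 53) ^ 11 - 10 ^ 9 + 10 ^ 8 + 10 ^ 7 - 10 ^ 3 - 10 = 50 := by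
  decide

private lemma zmod53_ecyc : (0 : ZMod 53) + 10 ^ 0 + 10 ^ 1 + 10 ^ 2 + 10 ^ 3 + 10 ^ 4 + 10 ^ 5 +
    10 ^ 6 + 10 ^ 7 + 10 ^ 8 + 10 ^ 9 + 10 ^ 10 + 10 ^ 11 + 10 ^ 12 = 0 := by decide

private lemma zmod53_h1 :
    ∀ x : ZMod 53, x ^ 4 + 18 * x ^ 3 + 2 * x ^ 2 + 50 * x + 1 ≠ 0 := by decide

private lemma zmod53_h2 : ∀ a b : ZMod 53,
    ¬((50 : ZMod 53) - b * (18 - a) - a * (2 - b - a * (18 - a)) = 0 ∧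
      (1 : ZMod 53) - b * (2 - b - a * (18 - a)) = 0) := by decide

/-- For `ζ` a primitive 13th root of unity in `ℚ(ζ₁₃)`, the polynomial
`t⁴ + (ζ¹¹ + ζ⁹ + ζ⁸ + ζ⁷ + 2ζ⁶ + 2ζ⁵ + ζ³ + 2ζ² + ζ + 1)t³ + 2t²
  + (ζ¹¹ - ζ⁹ + ζ⁸ + ζ⁷ - ζ³ - ζ)t + 1` is irreducible in `ℚ(ζ₁₃)[t]`. -/
theorem stmt_18 (ζ : CyclotomicField 13 ℚ) (hζ : IsPrimitiveRoot ζ 13) :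
    Irreducible
      (X ^ 4 +
        C (ζ ^ 11 + ζ ^ 9 + ζ ^ 8 + ζ ^ 7 + 2 * ζ ^ 6 + 2 * ζ ^ 5 + ζ ^ 3 +
            2 * ζ ^ 2 + ζ + 1) * X ^ 3 +
        2 * X ^ 2 +
        C (ζ ^ 11 - ζ ^ 9 + ζ ^ 8 + ζ ^ 7 - ζ ^ 3 - ζ) * X + 1 :
        Polynomial (CyclotomicField 13 ℚ)) := by
  haveI : Fact (Nat.Prime 13) := ⟨by norm_num⟩
  haveI : Fact (Nat.Prime 53) := ⟨by norm_num⟩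
  haveI : NumberField (CyclotomicField 13 ℚ) :=
    inferInstance
  haveI : Fact (Nat.Prime ((13 : ℕ+) : ℕ)) := ⟨by norm_num⟩
  have hζ' : IsPrimitiveRoot ζ (13 : ℕ) := by exact_mod_cast hζ
  set η : NumberField.RingOfIntegers (CyclotomicField 13 ℚ) := hζ'.toInteger with hη
  set F : Polynomial (NumberField.RingOfIntegers (CyclotomicField 13 ℚ)) :=
    X ^ 4 +
      C (η ^ 11 + η ^ 9 + η ^ 8 + η ^ 7 + 2 * η ^ 6 + 2 * η ^ 5 + η ^ 3 +
          2 * η ^ 2 + η + 1) * X ^ 3 +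
      C 2 * X ^ 2 +
      C (η ^ 11 - η ^ 9 + η ^ 8 + η ^ 7 - η ^ 3 - η) * X + C 1 with hF
  have hFM : F.Monic := by unfold F; monicity!
  -- the reduction map to ZMod 53
  haveI : IsCyclotomicExtension {13} ℚ (CyclotomicField 13 ℚ) := by
    convert (CyclotomicField.isCyclotomicExtension (n := 13) (K := ℚ))
    · rfl
    · exact Subsingleton.elim _ _
  set B := hζ'.integralPowerBasis with hB
  have hgen : B.gen = η := hζ'.integralPowerBasis_gen
  have hroot : (aeval (10 : ZMod 53)) (minpoly ℤ B.gen) = 0 := by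
    have hminp : minpoly ℤ η = Polynomial.cyclotomic 13 ℤ := by
      have h1 : minpoly ℤ η = minpoly ℤ ζ := by
        have := minpoly.algebraMap_eq (A := ℤ)
          (NumberField.RingOfIntegers.coe_injective (K := CyclotomicField 13 ℚ)) η
        rw [show algebraMap (NumberField.RingOfIntegers (CyclotomicField 13 ℚ)) (CyclotomicField 13 ℚ) η = ζ from rfl] at this
        exact this.symm
      rw [h1]; convert (Polynomial.cyclotomic_eq_minpoly hζ (by norm_num)).symm
      exact Subsingleton.elim _ _
    rw [hgen, hminp, Polynomial.cyclotomic_prime ℤ 13]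
    simp only [map_sum, map_add, map_pow, map_one, map_zero, aeval_X, Finset.sum_range_succ,
      Finset.sum_range_zero]
    exact zmod53_ecyc
  set ψ : NumberField.RingOfIntegers (CyclotomicField 13 ℚ) →+* ZMod 53 := (B.lift (10 : ZMod 53) hroot).toRingHom
    with hψ
  have hψη : ψ η = 10 := by
    rw [← hgen]
    exact B.lift_gen (10 : ZMod 53) hroot
  have hmapF : F.map ψ =
      X ^ 4 + C (18 : ZMod 53) * X ^ 3 + C (2 : ZMod 53) * X ^ 2 +
        C (50 : ZMod 53) * X + C (1 : ZMod 53) := by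
    have hc3 : ψ (η ^ 11 + η ^ 9 + η ^ 8 + η ^ 7 + 2 * η ^ 6 + 2 * η ^ 5 + η ^ 3 +
        2 * η ^ 2 + η + 1) = 18 := by
      simp only [map_add, map_mul, map_pow, map_ofNat, map_one, hψη]
      exact zmod53_e3
    have hc1 : ψ (η ^ 11 - η ^ 9 + η ^ 8 + η ^ 7 - η ^ 3 - η) = 50 := by
      simp only [map_add, map_sub, map_mul, map_pow, map_ofNat, map_one, hψη]
      exact zmod53_e1
    rw [hF]
    simp only [Polynomial.map_add, Polynomial.map_mul, Polynomial.map_pow, Polynomial.map_X,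
      Polynomial.map_C, hc3, hc1, map_ofNat, map_one, Polynomial.map_ofNat, Polynomial.map_one]
  have hFirr : Irreducible F := by
    apply hFM.irreducible_of_irreducible_map ψ
    rw [hmapF]
    exact quartic_irreducible zmod53_h1 zmod53_h2
  have := (hFM.irreducible_iff_irreducible_map_fraction_map (K := CyclotomicField 13 ℚ)).mp hFirr
  have hmapK : F.map (algebraMap (NumberField.RingOfIntegers (CyclotomicField 13 ℚ)) (CyclotomicField 13 ℚ)) =
      X ^ 4 +
        C (ζ ^ 11 + ζ ^ 9 + ζ ^ 8 + ζ ^ 7 + 2 * ζ ^ 6 + 2 * ζ ^ 5 + ζ ^ 3 +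
            2 * ζ ^ 2 + ζ + 1) * X ^ 3 +
        2 * X ^ 2 +
        C (ζ ^ 11 - ζ ^ 9 + ζ ^ 8 + ζ ^ 7 - ζ ^ 3 - ζ) * X + 1 := by
    have hcoe : algebraMap (NumberField.RingOfIntegers (CyclotomicField 13 ℚ)) (CyclotomicField 13 ℚ) η = ζ := rfl
    have hc3 : algebraMap (NumberField.RingOfIntegers (CyclotomicField 13 ℚ)) (CyclotomicField 13 ℚ) (η ^ 11 + η ^ 9 + η ^ 8 + η ^ 7 +
        2 * η ^ 6 + 2 * η ^ 5 + η ^ 3 + 2 * η ^ 2 + η + 1) =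
        ζ ^ 11 + ζ ^ 9 + ζ ^ 8 + ζ ^ 7 + 2 * ζ ^ 6 + 2 * ζ ^ 5 + ζ ^ 3 + 2 * ζ ^ 2 + ζ + 1 := by
      simp only [map_add, map_mul, map_pow, map_ofNat, map_one, hcoe]
    have hc1 : algebraMap (NumberField.RingOfIntegers (CyclotomicField 13 ℚ)) (CyclotomicField 13 ℚ)
        (η ^ 11 - η ^ 9 + η ^ 8 + η ^ 7 - η ^ 3 - η) =
        ζ ^ 11 - ζ ^ 9 + ζ ^ 8 + ζ ^ 7 - ζ ^ 3 - ζ := by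
      simp only [map_add, map_sub, map_mul, map_pow, map_ofNat, map_one, hcoe]
    rw [hF]
    simp only [Polynomial.map_add, Polynomial.map_mul, Polynomial.map_pow, Polynomial.map_X,
      Polynomial.map_C, hc3, hc1, map_ofNat, map_one, Polynomial.C_1, Polynomial.map_ofNat,
      Polynomial.map_one]
  rwa [hmapK] at this
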